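/- Let R be a Noetherian ring and let I ⊆ J be ideals of R. Then the J-adic completion of the I-adic completion of R is naturally isomorphic to the J-adic completion of R: (R^∧_I)^∧_{J·R^∧_I} ≅ R^∧_J. -/

import Mathlib

open AdicCompletion

namespace AdicCompletionAux

noncomputable section

variable {R : Type*} [CommRing R]

lemma mem_map_of_val_eq_zero [IsNoetherianRing R] (I : Ideal R) (n : ℕ)
    (x : AdicCompletion I R) (hx : x.val n = 0) :
    x ∈ (I ^ n).map (algebraMap R (AdicCompletion I R)) := by
  set S : Submodule R R := (I ^ n • ⊤ : Submodule R R) with hS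
  have hexact := AdicCompletion.map_exact (I := I) S.injective_subtype
    (LinearMap.exact_subtype_mkQ S) S.mkQ_surjective
  have hmap0 : AdicCompletion.map I S.mkQ x = 0 := by
    ext k
    rw [AdicCompletion.map_val_apply, AdicCompletion.val_zero_apply]
    rcases le_total n k with h | h
    · obtain ⟨r, hr⟩ := Submodule.Quotient.mk_surjective _ (x.val k)
      have hval : x.val n = Submodule.Quotient.mk r := by
        rw [← x.property h, ← hr]; rfl
      have hrS : r ∈ S := by
        rw [hx] at hval
        exact (Submodule.Quotient.mk_eq_zero S).mp hval.symm
      rw [← hr, LinearMap.reduceModIdeal_apply]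
      rw [Submodule.Quotient.mk_eq_zero]
      have : S.mkQ r = 0 := (Submodule.Quotient.mk_eq_zero S).mpr hrS
      rw [this]
      exact Submodule.zero_mem _
    · have h0 : x.val k = 0 := by
        rw [← x.property h, hx, _root_.map_zero]
      rw [h0, _root_.map_zero]
  obtain ⟨y, hy⟩ := (hexact x).mp hmap0
  obtain ⟨t, ht⟩ := AdicCompletion.ofTensorProduct_surjective_of_finite I (M := S) y
  rw [← hy, ← ht, ← LinearMap.comp_apply, AdicCompletion.ofTensorProduct_naturality I S.subtype]
  clear ht hy hmap0 hexact hx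
  induction t with
  | zero => simp
  | add a b ha hb => rw [map_add]; exact Ideal.add_mem _ ha hb
  | tmul a m =>
      rw [LinearMap.comp_apply]
      simp only [TensorProduct.AlgebraTensorModule.map_tmul, LinearMap.id_coe, id_eq,
        Submodule.coe_subtype, AdicCompletion.ofTensorProduct_tmul]
      have hsmul : a • AdicCompletion.of I R (m : R)
          = a * algebraMap R (AdicCompletion I R) (m : R) := rfl
      change a * algebraMap R (AdicCompletion I R) (m : R) ∈ _
      refine Ideal.mul_mem_left _ _ (Ideal.mem_map_of_mem _ ?_)
      have htop : (I ^ n • ⊤ : Ideal R) = I ^ n := by ext r; simp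
      have h2 : (m : R) ∈ (I ^ n • ⊤ : Ideal R) := m.2
      rwa [htop] at h2


variable (I J : Ideal R)

/-- Evaluation at level `n` as a ring hom. -/
def evalRingHom (n : ℕ) : AdicCompletion I R →+* R ⧸ (I ^ n • ⊤ : Ideal R) where
  toFun x := x.val n
  map_one' := rfl
  map_mul' _ _ := rfl
  map_zero' := rfl
  map_add' _ _ := rfl

lemma pow_smul_top_le (hIJ : I ≤ J) (n : ℕ) :
    (I ^ n • ⊤ : Ideal R) ≤ (J ^ n • ⊤ : Ideal R) :=
  Submodule.smul_mono_left (Ideal.pow_right_mono hIJ n)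

/-- Evaluation of the `I`-adic completion in `R ⧸ J ^ n`. -/
def Fhom (hIJ : I ≤ J) (n : ℕ) : AdicCompletion I R →+* R ⧸ (J ^ n • ⊤ : Ideal R) :=
  (Ideal.Quotient.factor (pow_smul_top_le I J hIJ n)).comp (evalRingHom I n)

lemma Fhom_apply (hIJ : I ≤ J) (n : ℕ) (x : AdicCompletion I R) :
    Fhom I J hIJ n x = Ideal.Quotient.factor (pow_smul_top_le I J hIJ n) (x.val n) := rfl

lemma Fhom_algebraMap (hIJ : I ≤ J) (n : ℕ) (r : R) :
    Fhom I J hIJ n (algebraMap R (AdicCompletion I R) r)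
      = Ideal.Quotient.mk (J ^ n • ⊤ : Ideal R) r := rfl

lemma Fhom_surjective (hIJ : I ≤ J) (n : ℕ) : Function.Surjective (Fhom I J hIJ n) := fun y ↦
  Quotient.inductionOn' y fun r ↦ ⟨algebraMap R (AdicCompletion I R) r, rfl⟩

lemma smul_top_eq (K : Ideal R) (n : ℕ) : (K ^ n • ⊤ : Ideal R) = K ^ n := by ext r; simp

lemma ker_Fhom [IsNoetherianRing R] (hIJ : I ≤ J) (n : ℕ) :
    RingHom.ker (Fhom I J hIJ n) = (J.map (algebraMap R (AdicCompletion I R))) ^ n := by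
  have hJn : (J.map (algebraMap R (AdicCompletion I R))) ^ n
      = (J ^ n).map (algebraMap R (AdicCompletion I R)) := (Ideal.map_pow _ _ _).symm
  rw [hJn]
  apply le_antisymm
  · intro x hx
    obtain ⟨r, hr⟩ := Submodule.Quotient.mk_surjective _ (x.val n)
    have hF : Fhom I J hIJ n x = Ideal.Quotient.mk (J ^ n • ⊤ : Ideal R) r := by
      rw [Fhom_apply, ← hr]; rfl
    have hrJ : r ∈ J ^ n := by
      rw [RingHom.mem_ker] at hx
      rw [hx] at hF
      have := (Ideal.Quotient.eq_zero_iff_mem).mp hF.symm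
      rwa [smul_top_eq] at this
    have hx0 : (x - algebraMap R (AdicCompletion I R) r).val n = 0 := by
      rw [AdicCompletion.val_sub_apply, ← hr]
      exact sub_eq_zero_of_eq rfl
    have h1 := Ideal.map_mono (Ideal.pow_right_mono hIJ n)
      (mem_map_of_val_eq_zero I n _ hx0)
    have h2 : algebraMap R (AdicCompletion I R) r
        ∈ (J ^ n).map (algebraMap R (AdicCompletion I R)) := Ideal.mem_map_of_mem _ hrJ
    simpa using add_mem h1 h2
  · refine Ideal.map_le_iff_le_comap.mpr fun r hr ↦ ?_
    rw [Ideal.mem_comap, RingHom.mem_ker, Fhom_algebraMap, Ideal.Quotient.eq_zero_iff_mem,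
      smul_top_eq]
    exact hr

variable [IsNoetherianRing R]

/-- The induced map on component `n`. -/
def compHom (hIJ : I ≤ J) (n : ℕ) :
    (AdicCompletion I R) ⧸ ((J.map (algebraMap R (AdicCompletion I R))) ^ n
        • ⊤ : Ideal (AdicCompletion I R)) →+* R ⧸ (J ^ n • ⊤ : Ideal R) :=
  Ideal.Quotient.lift _ (Fhom I J hIJ n) (fun a ha ↦ by
    rw [← RingHom.mem_ker, ker_Fhom I J hIJ n]
    rwa [smul_top_eq] at ha)

lemma compHom_mk (hIJ : I ≤ J) (n : ℕ) (a : AdicCompletion I R) :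
    compHom I J hIJ n (Ideal.Quotient.mk _ a) = Fhom I J hIJ n a := rfl

lemma compHom_injective (hIJ : I ≤ J) (n : ℕ) : Function.Injective (compHom I J hIJ n) := by
  rw [RingHom.injective_iff_ker_eq_bot, RingHom.ker_eq_bot_iff_eq_zero]
  intro z hz
  obtain ⟨a, rfl⟩ := Ideal.Quotient.mk_surjective z
  rw [compHom_mk, ← RingHom.mem_ker, ker_Fhom I J hIJ n] at hz
  rw [Ideal.Quotient.eq_zero_iff_mem, smul_top_eq]
  exact hz

lemma compHom_surjective (hIJ : I ≤ J) (n : ℕ) : Function.Surjective (compHom I J hIJ n) := by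
  intro y
  obtain ⟨a, ha⟩ := Fhom_surjective I J hIJ n y
  exact ⟨Ideal.Quotient.mk _ a, ha⟩

lemma compHom_compat (hIJ : I ≤ J) {m n : ℕ} (hmn : m ≤ n)
    (z : (AdicCompletion I R) ⧸ ((J.map (algebraMap R (AdicCompletion I R))) ^ n
        • ⊤ : Ideal (AdicCompletion I R))) :
    transitionMap J R hmn (compHom I J hIJ n z)
      = compHom I J hIJ m
        (transitionMap (J.map (algebraMap R (AdicCompletion I R))) (AdicCompletion I R) hmn z) := by
  obtain ⟨a, rfl⟩ := Ideal.Quotient.mk_surjective z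
  obtain ⟨r, hr⟩ := Submodule.Quotient.mk_surjective _ (a.val n)
  have hm : a.val m = Submodule.Quotient.mk r := by rw [← a.property hmn, ← hr]; rfl
  have h1 : compHom I J hIJ n (Ideal.Quotient.mk _ a)
      = Ideal.Quotient.mk (J ^ n • ⊤ : Ideal R) r := by
    rw [compHom_mk, Fhom_apply, ← hr]; rfl
  have h2 : compHom I J hIJ m
      (transitionMap (J.map (algebraMap R (AdicCompletion I R))) (AdicCompletion I R) hmn
        (Ideal.Quotient.mk _ a)) = Ideal.Quotient.mk (J ^ m • ⊤ : Ideal R) r := by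
    show compHom I J hIJ m (Ideal.Quotient.mk _ a) = _
    rw [compHom_mk, Fhom_apply, hm]; rfl
  rw [h1, h2]; rfl

/-- Component ring equivalence. -/
def compEquiv (hIJ : I ≤ J) (n : ℕ) :
    ((AdicCompletion I R) ⧸ ((J.map (algebraMap R (AdicCompletion I R))) ^ n
        • ⊤ : Ideal (AdicCompletion I R))) ≃+* R ⧸ (J ^ n • ⊤ : Ideal R) :=
  RingEquiv.ofBijective (compHom I J hIJ n)
    ⟨compHom_injective I J hIJ n, compHom_surjective I J hIJ n⟩

/-- The global ring hom between completions. -/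
def Phi (hIJ : I ≤ J) :
    AdicCompletion (J.map (algebraMap R (AdicCompletion I R))) (AdicCompletion I R)
    →+* AdicCompletion J R where
  toFun x := ⟨fun n ↦ compHom I J hIJ n (x.val n), fun {m n} hmn ↦ by
    rw [compHom_compat I J hIJ hmn, x.property hmn]⟩
  map_one' := by ext n; exact (compHom I J hIJ n).map_one
  map_mul' x y := by ext n; exact (compHom I J hIJ n).map_mul _ _
  map_zero' := by ext n; exact (compHom I J hIJ n).map_zero
  map_add' x y := by ext n; exact (compHom I J hIJ n).map_add _ _

lemma Phi_val (hIJ : I ≤ J) (n : ℕ)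
    (x : AdicCompletion (J.map (algebraMap R (AdicCompletion I R))) (AdicCompletion I R)) :
    (Phi I J hIJ x).val n = compHom I J hIJ n (x.val n) := rfl

lemma Phi_bijective (hIJ : I ≤ J) : Function.Bijective (Phi I J hIJ) := by
  constructor
  · intro x y h
    ext n
    exact compHom_injective I J hIJ n (congrArg (fun z ↦ z.val n) h)
  · intro y
    refine ⟨⟨fun n ↦ (compEquiv I J hIJ n).symm (y.val n), fun {m n} hmn ↦ ?_⟩, ?_⟩
    · apply compHom_injective I J hIJ m
      have key := compHom_compat I J hIJ hmn ((compEquiv I J hIJ n).symm (y.val n))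
      have h2 : compHom I J hIJ n ((compEquiv I J hIJ n).symm (y.val n)) = y.val n :=
        (compEquiv I J hIJ n).apply_symm_apply _
      have h3 : compHom I J hIJ m ((compEquiv I J hIJ m).symm (y.val m)) = y.val m :=
        (compEquiv I J hIJ m).apply_symm_apply _
      show compHom I J hIJ m (transitionMap _ _ hmn ((compEquiv I J hIJ n).symm (y.val n)))
        = compHom I J hIJ m ((compEquiv I J hIJ m).symm (y.val m))
      rw [h3, ← key, h2, y.property hmn]
    · ext n
      show compHom I J hIJ n ((compEquiv I J hIJ n).symm (y.val n)) = y.val n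
      exact (compEquiv I J hIJ n).apply_symm_apply (y.val n)

end

end AdicCompletionAux

/-- Let `R` be a Noetherian ring and `I ⊆ J` ideals of `R`. Then the `J`-adic completion of
the `I`-adic completion of `R` is naturally isomorphic to the `J`-adic completion of `R`,
compatibly with the canonical maps from `R`. -/
theorem adicCompletion_adicCompletion {R : Type*} [CommRing R] [IsNoetherianRing R]
    (I J : Ideal R) (hIJ : I ≤ J) :
    ∃ φ : AdicCompletion (J.map (algebraMap R (AdicCompletion I R))) (AdicCompletion I R)
        ≃+* AdicCompletion J R,
      ∀ r : R,
        φ (algebraMap (AdicCompletion I R)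
            (AdicCompletion (J.map (algebraMap R (AdicCompletion I R))) (AdicCompletion I R))
            (algebraMap R (AdicCompletion I R) r))
          = algebraMap R (AdicCompletion J R) r := by
  refine ⟨RingEquiv.ofBijective (AdicCompletionAux.Phi I J hIJ)
    (AdicCompletionAux.Phi_bijective I J hIJ), fun r ↦ rfl⟩
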